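/- Suppose R ⊆ D^Σ has non-empty complement, but for every attribute i ∈ Σ the projection of the complement ¬R to position i is a proper subset of D. Then R is non-degenerate (not a Cartesian product over any partition into at least two non-empty parts). -/

import Mathlib

/-- Restriction of an attributed tuple to a subset of attributes. -/
def restrictTo {σ D : Type*} (a : σ → D) (Λ : Set σ) : ↥Λ → D := fun x => a x

/-- Projection of an attributed relation to a subset of attributes. -/
def proj {σ D : Type*} (R : Set (σ → D)) (Λ : Set σ) : Set (↥Λ → D) :=
  (fun a => restrictTo a Λ) '' R

/-- `Λ : Fin m → Set σ` is a partition of the attribute set `σ`. -/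
def IsPartition {σ : Type*} (m : ℕ) (Λ : Fin m → Set σ) : Prop :=
  Pairwise (Function.onFun Disjoint Λ) ∧ ⋃ i, Λ i = Set.univ

/-- `R` is a Cartesian product over the family `Λ`. -/
def IsCartesianProductOver {σ D : Type*} (R : Set (σ → D)) (m : ℕ)
    (Λ : Fin m → Set σ) : Prop :=
  ∃ Rs : ∀ i, Set (↥(Λ i) → D), R = {a | ∀ i, restrictTo a (Λ i) ∈ Rs i}

/-- A relation is degenerate when it is a Cartesian product over a partition
into at least two non-empty parts. -/
def Degenerate {σ D : Type*} (R : Set (σ → D)) : Prop :=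
  ∃ m, 2 ≤ m ∧ ∃ Λ : Fin m → Set σ, IsPartition m Λ ∧ (∀ i, (Λ i).Nonempty) ∧
    IsCartesianProductOver R m Λ

/-- If the complement of `R` is non-empty but its projection to every single
attribute is a proper subset of the domain, then `R` is non-degenerate. -/
theorem stmt_3 {σ D : Type*} [Fintype σ] (hcard : 2 ≤ Fintype.card σ)
    (R : Set (σ → D)) (hne : Rᶜ.Nonempty)
    (hproj : ∀ i : σ, {d : D | ∃ a ∈ Rᶜ, a i = d} ≠ Set.univ) :
    ¬ Degenerate R := by
  classical
  rintro ⟨m, hm, Λ, ⟨hdisj, hcover⟩, hnepart, Rs, hR⟩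
  obtain ⟨a, ha⟩ := hne
  rw [Set.mem_compl_iff, hR, Set.mem_setOf_eq] at ha
  push_neg at ha
  obtain ⟨i, hi⟩ := ha
  haveI : Nontrivial (Fin m) := by
    have : 1 < Fintype.card (Fin m) := by simp only [Fintype.card_fin]; omega
    exact Fintype.one_lt_card_iff_nontrivial.mp this
  obtain ⟨j, hj⟩ := exists_ne i
  obtain ⟨x, hx⟩ := hnepart j
  apply hproj x
  apply Set.eq_univ_of_forall
  intro d
  refine ⟨Function.update a x d, ?_, by simp⟩
  rw [Set.mem_compl_iff, hR, Set.mem_setOf_eq]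
  push_neg
  refine ⟨i, ?_⟩
  have hrest : restrictTo (Function.update a x d) (Λ i) = restrictTo a (Λ i) := by
    funext y
    have hyx : (y : σ) ≠ x := by
      intro h
      exact (Set.disjoint_left.mp (hdisj hj) hx) (h ▸ y.2)
    simp [restrictTo, Function.update_of_ne hyx]
  rw [hrest]
  exact hi
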